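/- Let C be an invertible d×d complex matrix. Then for every d×d unitary matrix U, ‖CU − I‖ ≥ ‖√(CC†) − I‖, and equality holds for U = √(C†C)·C⁻¹. That is, the unitary U minimizing ‖CU − I‖ is Û = √(C†C)·C⁻¹, with minimal value ‖CÛ − I‖ = ‖√(CC†) − I‖. -/

import Mathlib

open Matrix
open scoped ComplexOrder

/-- The square root of a positive semidefinite matrix (the definition of
`Matrix.PosSemidef.sqrt` in the older Mathlib, since removed). -/
noncomputable def Matrix.PosSemidef.sqrt {n 𝕜 : Type*} [Fintype n] [RCLike 𝕜] [DecidableEq n]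
    {A : Matrix n n 𝕜} (hA : A.PosSemidef) : Matrix n n 𝕜 :=
  hA.1.eigenvectorUnitary.1 * diagonal ((↑) ∘ (√·) ∘ hA.1.eigenvalues) *
  (star hA.1.eigenvectorUnitary : Matrix n n 𝕜)

/-- Frobenius norm of a complex matrix. -/
noncomputable def frob {d : ℕ} (A : Matrix (Fin d) (Fin d) ℂ) : ℝ :=
  Real.sqrt ((Aᴴ * A).trace).re

section sqrtPort
open scoped MatrixOrder

lemma Matrix.PosSemidef.sqrt_eq_cfc' {n 𝕜 : Type*} [Fintype n] [RCLike 𝕜] [DecidableEq n]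
    {A : Matrix n n 𝕜} (hA : A.PosSemidef) : hA.sqrt = CFC.sqrt A := by
  rw [CFC.sqrt_eq_cfc, cfc_nnreal_eq_real _ A hA.nonneg, hA.1.cfc_eq]
  unfold Matrix.PosSemidef.sqrt IsHermitian.cfc
  rw [Unitary.conjStarAlgAut_apply]
  unfold Real.sqrt
  rfl

lemma Matrix.PosSemidef.sqrt_mul_self {n 𝕜 : Type*} [Fintype n] [RCLike 𝕜] [DecidableEq n]
    {A : Matrix n n 𝕜} (hA : A.PosSemidef) : hA.sqrt * hA.sqrt = A := by
  rw [hA.sqrt_eq_cfc']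
  exact CFC.sqrt_mul_sqrt_self A hA.nonneg

lemma Matrix.PosSemidef.posSemidef_sqrt {n 𝕜 : Type*} [Fintype n] [RCLike 𝕜] [DecidableEq n]
    {A : Matrix n n 𝕜} (hA : A.PosSemidef) : hA.sqrt.PosSemidef := by
  rw [hA.sqrt_eq_cfc']
  exact (CFC.sqrt_nonneg A).posSemidef

lemma Matrix.PosSemidef.eq_sqrt_of_sq_eq {n 𝕜 : Type*} [Fintype n] [RCLike 𝕜] [DecidableEq n]
    {A : Matrix n n 𝕜} (hA : A.PosSemidef) (B : Matrix n n 𝕜) (hB : B.PosSemidef)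
    (hAB : B ^ 2 = A) : B = hA.sqrt := by
  rw [hA.sqrt_eq_cfc', ← hAB]
  exact (CFC.sqrt_sq B hB.nonneg).symm

end sqrtPort

section aux
variable {d : ℕ}

lemma frob_sub_one (A : Matrix (Fin d) (Fin d) ℂ) :
    frob (A - 1) = Real.sqrt (((Aᴴ * A).trace).re + d - 2 * (A.trace).re) := by
  unfold frob
  congr 1
  have h : (A - 1)ᴴ * (A - 1) = Aᴴ * A - Aᴴ - A + 1 := by
    rw [conjTranspose_sub, conjTranspose_one]
    noncomm_ring
  rw [h, trace_add, trace_sub, trace_sub, trace_one, trace_conjTranspose]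
  simp [Complex.add_re, Complex.sub_re]
  ring

lemma re_trace_mul_unitary_le (P V : Matrix (Fin d) (Fin d) ℂ)
    (hP : P.PosSemidef) (hV : V ∈ Matrix.unitaryGroup (Fin d) ℂ) :
    ((P * V).trace).re ≤ (P.trace).re := by
  set S := hP.sqrt with hSdef
  have hSS : S * S = P := hP.sqrt_mul_self
  have hSH : Sᴴ = S := hP.posSemidef_sqrt.1
  have hVV : Vᴴ * V = 1 := by
    have := (Unitary.mem_iff.mp hV).1
    rwa [star_eq_conjTranspose] at this
  have hPii : ∀ i, (P i i) = ∑ j, (Complex.normSq (S i j) : ℂ) := by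
    intro i
    rw [← hSS, mul_apply]
    refine Finset.sum_congr rfl fun j _ => ?_
    have hji : S j i = star (S i j) := by rw [← hSH, conjTranspose_apply, hSH]
    rw [hji, Complex.star_def, Complex.mul_conj]
  have hPii2 : ∀ i, (P i i) = ∑ j, (Complex.normSq ((V * S) j i) : ℂ) := by
    intro i
    have h1 : (V * S)ᴴ * (V * S) = P := by
      rw [conjTranspose_mul, hSH, mul_assoc, ← mul_assoc Vᴴ V, hVV, one_mul, hSS]
    conv_lhs => rw [← h1]
    rw [mul_apply]
    refine Finset.sum_congr rfl fun j _ => ?_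
    rw [conjTranspose_apply, Complex.star_def, mul_comm, Complex.mul_conj]
  have hPre : ∀ i, (P i i).re = ∑ j, Complex.normSq (S i j) := by
    intro i; rw [hPii i]; simp
  have hPre2 : ∀ i, (P i i).re = ∑ j, Complex.normSq ((V * S) j i) := by
    intro i; rw [hPii2 i]; simp
  have hPnn : ∀ i, 0 ≤ (P i i).re := by
    intro i
    rw [hPre i]
    exact Finset.sum_nonneg fun j _ => Complex.normSq_nonneg _
  have htr : (P * V).trace = (S * (V * S)).trace := by
    rw [← hSS, mul_assoc, trace_mul_comm, mul_assoc]
  have key : ∀ i, ((S * (V * S)) i i).re ≤ (P i i).re := by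
    intro i
    set x : EuclideanSpace ℂ (Fin d) := WithLp.toLp 2 (fun j => star (S i j)) with hx
    set y : EuclideanSpace ℂ (Fin d) := WithLp.toLp 2 (fun j => (V * S) j i) with hy
    have hinner : (inner ℂ x y : ℂ) = (S * (V * S)) i i := by
      rw [PiLp.inner_apply, mul_apply]
      refine Finset.sum_congr rfl fun j _ => ?_
      simp [hx, hy, mul_comm]
    have hnx : ‖x‖ = Real.sqrt ((P i i).re) := by
      rw [EuclideanSpace.norm_eq]
      congr 1
      rw [hPre i]
      refine Finset.sum_congr rfl fun j _ => ?_
      simp [hx, Complex.normSq_eq_norm_sq]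
    have hny : ‖y‖ = Real.sqrt ((P i i).re) := by
      rw [EuclideanSpace.norm_eq]
      congr 1
      rw [hPre2 i]
      refine Finset.sum_congr rfl fun j _ => ?_
      simp [hy, Complex.normSq_eq_norm_sq]
    calc ((S * (V * S)) i i).re ≤ ‖(S * (V * S)) i i‖ := Complex.re_le_norm _
      _ = ‖(inner ℂ x y : ℂ)‖ := by rw [hinner]
      _ ≤ ‖x‖ * ‖y‖ := norm_inner_le_norm x y
      _ = (P i i).re := by rw [hnx, hny, Real.mul_self_sqrt (hPnn i)]
  calc ((P * V).trace).re = ∑ i, ((S * (V * S)) i i).re := by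
        rw [htr, trace]; simp [diag]
    _ ≤ ∑ i, (P i i).re := Finset.sum_le_sum fun i _ => key i
    _ = (P.trace).re := by rw [trace]; simp [diag]

end aux

/-- for invertible C, the unitary minimizing ‖CU − I‖ is
Û = √(C†C)·C⁻¹, with minimal value ‖√(CC†) − I‖. -/
theorem unitary_optimization {d : ℕ}
    (C : Matrix (Fin d) (Fin d) ℂ) (hC : IsUnit C.det) :
    (∀ U ∈ Matrix.unitaryGroup (Fin d) ℂ,
      frob ((Matrix.posSemidef_self_mul_conjTranspose C).sqrt - 1)
        ≤ frob (C * U - 1)) ∧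
    frob (C * ((Matrix.posSemidef_conjTranspose_mul_self C).sqrt * C⁻¹) - 1)
      = frob ((Matrix.posSemidef_self_mul_conjTranspose C).sqrt - 1) := by
  have hPS := Matrix.posSemidef_self_mul_conjTranspose C
  set P := hPS.sqrt with hPdef
  have hP : P.PosSemidef := hPS.posSemidef_sqrt
  have hPH : Pᴴ = P := hP.1
  have hP2 : P * P = C * Cᴴ := hPS.sqrt_mul_self
  have hdetP : IsUnit P.det := by
    have h : P.det * P.det = C.det * star C.det := by
      rw [← det_mul, hP2, det_mul, det_conjTranspose]
    have hu : IsUnit (P.det * P.det) := h ▸ (hC.mul hC.star)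
    exact isUnit_of_mul_isUnit_left hu
  have hPinv : P * P⁻¹ = 1 := mul_nonsing_inv P hdetP
  have hPinv' : P⁻¹ * P = 1 := nonsing_inv_mul P hdetP
  set W := P⁻¹ * C with hWdef
  have hPW : P * W = C := by rw [hWdef, ← mul_assoc, hPinv, one_mul]
  have hWWH : W * Wᴴ = 1 := by
    have hPinvH : (P⁻¹)ᴴ = P⁻¹ := by rw [conjTranspose_nonsing_inv, hPH]
    rw [hWdef, conjTranspose_mul, hPinvH]
    calc P⁻¹ * C * (Cᴴ * P⁻¹) = P⁻¹ * (C * Cᴴ) * P⁻¹ := by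
          simp only [mul_assoc]
      _ = P⁻¹ * (P * P) * P⁻¹ := by rw [hP2]
      _ = 1 := by rw [← mul_assoc P⁻¹ P P, hPinv', one_mul, hPinv]
  have hWmem : W ∈ Matrix.unitaryGroup (Fin d) ℂ := by
    rw [Matrix.mem_unitaryGroup_iff, star_eq_conjTranspose]
    exact hWWH
  constructor
  · intro U hU
    rw [frob_sub_one, frob_sub_one]
    apply Real.sqrt_le_sqrt
    have h1 : Pᴴ * P = P * P := by rw [hPH]
    have h2 : ((C * U)ᴴ * (C * U)).trace = (P * P).trace := by
      have hUU : U * Uᴴ = 1 := by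
        have := (Unitary.mem_iff.mp hU).2
        rwa [star_eq_conjTranspose] at this
      have e : (C * U)ᴴ * (C * U) = Uᴴ * (Cᴴ * C) * U := by
        rw [conjTranspose_mul, ← mul_assoc, mul_assoc Uᴴ Cᴴ C]
      rw [e, trace_mul_cycle, hUU, one_mul, trace_mul_comm, hP2]
    have h3 : ((C * U).trace).re ≤ (P.trace).re := by
      have hCU : C * U = P * (W * U) := by rw [← mul_assoc, hPW]
      rw [hCU]
      exact re_trace_mul_unitary_le P (W * U) hP (mul_mem hWmem hU)
    rw [h1, h2]
    linarith
  · have hQ : (Matrix.posSemidef_conjTranspose_mul_self C).sqrt = Wᴴ * P * W := by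
      symm
      apply Matrix.PosSemidef.eq_sqrt_of_sq_eq
      · have := hP.mul_mul_conjTranspose_same Wᴴ
        rwa [conjTranspose_conjTranspose] at this
      · calc (Wᴴ * P * W) ^ 2
            = Wᴴ * (P * ((W * Wᴴ) * (P * W))) := by rw [pow_two]; simp only [mul_assoc]
          _ = Wᴴ * (P * (P * W)) := by rw [hWWH, one_mul]
          _ = (P * W)ᴴ * (P * W) := by
              have hct : (P * W)ᴴ = Wᴴ * Pᴴ := conjTranspose_mul P W
              rw [hct, hPH]; simp only [mul_assoc]
          _ = Cᴴ * C := by rw [hPW]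
    have hCQ : C * (Wᴴ * P * W) = P * C := by
      calc C * (Wᴴ * P * W) = P * (W * (Wᴴ * (P * W))) := by
            rw [← hPW]; simp only [mul_assoc]
        _ = P * (P * W) := by rw [← mul_assoc W Wᴴ, hWWH, one_mul]
        _ = P * C := by rw [hPW]
    have hkey : C * ((Matrix.posSemidef_conjTranspose_mul_self C).sqrt * C⁻¹) = P := by
      rw [hQ, ← mul_assoc, hCQ, mul_assoc, mul_nonsing_inv C hC, mul_one]
    rw [hkey]
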